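/- For a sequence s = (s_1,...,s_r) of positive integers with s_1 ≥ 2, the Hurwitz multizeta function He_+^s(z) = Σ_{0 < n_r < ... < n_1} ∏_i (n_i + z)^{-s_i} converges for |z| < 1/2 and equals the power series Σ_{k_1,...,k_r ≥ 0} [∏_i C(s_i+k_i-1, k_i)] Ze^{(s_1+k_1,...,s_r+k_r)} (-z)^{k_1+...+k_r}. -/

import Mathlib

open Finset

private def finSuccEquivProd (r : ℕ) : (Fin (r+1) → ℕ) ≃ ℕ × (Fin r → ℕ) :=
  ⟨fun k => (k 0, fun i => k i.succ), fun p => Fin.cons p.1 p.2,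
    fun k => funext fun i => Fin.cases rfl (fun _ => rfl) i, fun _ => rfl⟩

/-- Finite product of absolutely summable families over `Fin r → ℕ`. -/
lemma pi_hasSum_prod {𝕜 : Type*} [RCLike 𝕜] : ∀ (r : ℕ) (f : Fin r → ℕ → 𝕜) (a : Fin r → 𝕜),
    (∀ i, Summable fun k => ‖f i k‖) → (∀ i, HasSum (f i) (a i)) →
    HasSum (fun k : Fin r → ℕ => ∏ i, f i (k i)) (∏ i, a i) ∧
      Summable (fun k : Fin r → ℕ => ‖∏ i, f i (k i)‖) := by
  intro r
  induction r with
  | zero =>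
    intro f a _ _
    simp only [Finset.univ_eq_empty, Finset.prod_empty]
    constructor
    · simpa using hasSum_single (f := fun _ : Fin 0 → ℕ => (1:𝕜)) (fun _ => 0)
        (fun b hb => absurd (Subsingleton.elim _ _) hb)
    · simpa using (hasSum_single (f := fun _ : Fin 0 → ℕ => (1:ℝ)) (fun _ => 0)
        (fun b hb => absurd (Subsingleton.elim _ _) hb)).summable
  | succ r ih =>
    intro f a hn ha
    obtain ⟨IH1, IH2⟩ := ih (fun i => f i.succ) (fun i => a i.succ)
      (fun i => hn i.succ) (fun i => ha i.succ)
    have hprod : ∀ k : Fin (r+1) → ℕ, ∏ i, f i (k i)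
        = f 0 (k 0) * ∏ i : Fin r, f i.succ (k i.succ) := fun k => Fin.prod_univ_succ _
    have hpairnorm : Summable fun p : ℕ × (Fin r → ℕ) =>
        ‖f 0 p.1 * ∏ i : Fin r, f i.succ (p.2 i)‖ :=
      Summable.mul_norm (f := f 0) (g := fun k : Fin r → ℕ => ∏ i : Fin r, f i.succ (k i)) (hn 0) IH2
    have hpair : HasSum (fun p : ℕ × (Fin r → ℕ) => f 0 p.1 * ∏ i : Fin r, f i.succ (p.2 i))
        (a 0 * ∏ i : Fin r, a i.succ) := by
      have hS := summable_mul_of_summable_norm (f := f 0)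
        (g := fun k : Fin r → ℕ => ∏ i : Fin r, f i.succ (k i)) (hn 0) IH2
      have := (ha 0).mul_eq IH1 hS.hasSum
      rw [this]
      exact hS.hasSum
    constructor
    · have h : HasSum (fun k : Fin (r+1) → ℕ => f 0 (k 0) * ∏ i : Fin r, f i.succ (k i.succ))
          (a 0 * ∏ i : Fin r, a i.succ) :=
        ((finSuccEquivProd r).hasSum_iff
          (f := fun p : ℕ × (Fin r → ℕ) => f 0 p.1 * ∏ i : Fin r, f i.succ (p.2 i))
          (a := a 0 * ∏ i : Fin r, a i.succ)).mpr hpair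
      rw [Fin.prod_univ_succ,
        show (fun k : Fin (r+1) → ℕ => ∏ i, f i (k i))
          = fun k => f 0 (k 0) * ∏ i : Fin r, f i.succ (k i.succ) from funext hprod]
      exact h
    · have h : Summable (fun k : Fin (r+1) → ℕ =>
          ‖f 0 (k 0) * ∏ i : Fin r, f i.succ (k i.succ)‖) :=
        ((finSuccEquivProd r).summable_iff (f := fun p : ℕ × (Fin r → ℕ) =>
          ‖f 0 p.1 * ∏ i : Fin r, f i.succ (p.2 i)‖)).mpr hpairnorm
      apply h.congr
      intro k
      rw [hprod k]


lemma binom_hasSum {𝕜 : Type*} [RCLike 𝕜] (s : ℕ) (hs : 1 ≤ s) (m : ℕ) (hm : 1 ≤ m)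
    (x : 𝕜) (hx : ‖x‖ < 1/2) :
    HasSum (fun k : ℕ => (((s + k - 1).choose k : 𝕜)) * (-x)^k * (((m:𝕜))^(s+k))⁻¹)
      ((((m:𝕜)+x)^s)⁻¹) := by
  have hm1 : (1:ℝ) ≤ (m:ℝ) := by exact_mod_cast hm
  have hmne : (m:𝕜) ≠ 0 := Nat.cast_ne_zero.mpr (by omega)
  have hnm : ‖(m:𝕜)‖ = (m:ℝ) := RCLike.norm_natCast m
  have hw : ‖-x / (m:𝕜)‖ < 1 := by
    rw [norm_div, norm_neg, hnm]
    calc ‖x‖ / (m:ℝ) ≤ ‖x‖ / 1 := by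
          apply div_le_div_of_nonneg_left (norm_nonneg x) one_pos hm1
      _ < 1 := by rw [div_one]; linarith
  have hmx : (m:𝕜) + x ≠ 0 := by
    intro h
    have : ‖(m:𝕜)‖ = ‖x‖ := by
      have : (m:𝕜) = -x := by linear_combination h
      rw [this, norm_neg]
    rw [hnm] at this
    linarith
  have H := (hasSum_choose_mul_geometric_of_norm_lt_one (s-1) hw).mul_left (((m:𝕜))^s)⁻¹
  have hval : (((m:𝕜))^s)⁻¹ * (1 / (1 - -x/(m:𝕜)) ^ (s - 1 + 1)) = (((m:𝕜)+x)^s)⁻¹ := by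
    have h1 : s - 1 + 1 = s := by omega
    have h2 : (1 : 𝕜) - -x/(m:𝕜) = ((m:𝕜) + x) / m := by field_simp; ring
    rw [h1, h2, div_pow, one_div, inv_div, div_eq_mul_inv, ← mul_assoc,
      inv_mul_cancel₀ (pow_ne_zero _ hmne), one_mul]
  rw [hval] at H
  apply H.congr_fun
  intro k
  have hch : ((k + (s-1)).choose (s-1)) = ((s + k - 1).choose k) := by
    have h1 : k + (s - 1) - k = s - 1 := by omega
    have h2 : k ≤ k + (s - 1) := by omega
    have := Nat.choose_symm h2
    rw [h1] at this
    rw [this]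
    congr 1
    omega
  rw [hch]
  have : (-x / (m:𝕜))^k = (-x)^k * ((m:𝕜)^k)⁻¹ := by rw [div_pow, div_eq_mul_inv]
  rw [this, pow_add, mul_inv]
  ring

lemma binom_norm_hasSum {𝕜 : Type*} [RCLike 𝕜] (s : ℕ) (hs : 1 ≤ s) (m : ℕ) (hm : 1 ≤ m)
    (x : 𝕜) (hx : ‖x‖ < 1/2) :
    HasSum (fun k : ℕ => ‖(((s + k - 1).choose k : 𝕜)) * (-x)^k * (((m:𝕜))^(s+k))⁻¹‖)
      ((((m:ℝ) - ‖x‖)^s)⁻¹) := by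
  have hx' : ‖-‖x‖‖ < 1/2 := by
    rw [norm_neg, Real.norm_eq_abs, abs_of_nonneg (norm_nonneg x)]
    exact hx
  have H := binom_hasSum (𝕜 := ℝ) s hs m hm (-‖x‖) hx'
  rw [show (m:ℝ) + -‖x‖ = (m:ℝ) - ‖x‖ by ring] at H
  apply H.congr_fun
  intro k
  rw [neg_neg, norm_mul, norm_mul, norm_pow, norm_neg, norm_inv, norm_pow, RCLike.norm_natCast,
    RCLike.norm_natCast]

lemma mzv_aux_summable (r : ℕ) (hr : 0 < r) (s : Fin r → ℕ) (h1 : ∀ i, 1 ≤ s i)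
    (h2 : 2 ≤ s ⟨0, hr⟩) :
    Summable (fun n : {f : Fin r → ℕ // StrictAnti f ∧ ∀ i, 0 < f i} =>
      ∏ i, (((n.1 i : ℝ)) ^ (s i))⁻¹) := by
  set p : ℝ := 1 + 1/(r:ℝ) with hp
  have hrpos : (0:ℝ) < r := by exact_mod_cast hr
  have hp1 : 1 < p := by
    rw [hp]
    nlinarith [one_div_pos.mpr hrpos]
  set g : ℕ → ℝ := fun m => ((m:ℝ) ^ p)⁻¹ with hg
  have hgs : Summable g := Real.summable_nat_rpow_inv.mpr hp1
  have hgnn : ∀ m, 0 ≤ g m := fun m => by positivity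
  have hfull : Summable (fun k : Fin r → ℕ => ∏ i, g (k i)) := by
    refine (pi_hasSum_prod r (fun _ m => g m) (fun _ => ∑' m, g m) (fun i => ?_)
      (fun i => hgs.hasSum)).1.summable
    exact hgs.congr (fun m => (Real.norm_of_nonneg (hgnn m)).symm)
  have hsub := hfull.subtype {f : Fin r → ℕ | StrictAnti f ∧ ∀ i, 0 < f i}
  refine Summable.of_nonneg_of_le (fun n => by positivity) (fun n => ?_) hsub
  -- pointwise bound : ∏ (n_i ^ s_i)⁻¹ ≤ ∏ g (n_i)
  obtain ⟨n, hanti, hpos⟩ := n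
  set i0 : Fin r := ⟨0, hr⟩ with hi0
  have hone : ∀ i, (1:ℝ) ≤ (n i : ℝ) := fun i => by exact_mod_cast hpos i
  have hposR : ∀ i, (0:ℝ) < (n i : ℝ) := fun i => lt_of_lt_of_le one_pos (hone i)
  set N : ℝ := (n i0 : ℝ) with hN
  have hle : ∀ i, (n i : ℝ) ≤ N := by
    intro i
    have h := hanti.antitone (Fin.mk_le_of_le_val (Nat.zero_le i.1) : i0 ≤ i)
    rw [hN]
    exact_mod_cast h
  have key : ∏ i, ((n i : ℝ)) ^ p ≤ ∏ i, ((n i : ℝ)) ^ (s i) := by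
    have step1 : ∏ i, ((n i : ℝ)) ^ p
        = (∏ i, (n i : ℝ)) * ∏ i, ((n i : ℝ)) ^ (1/(r:ℝ)) := by
      rw [← Finset.prod_mul_distrib]
      refine Finset.prod_congr rfl (fun i _ => ?_)
      rw [hp, Real.rpow_add (hposR i), Real.rpow_one]
    have step2 : ∏ i, ((n i : ℝ)) ^ (1/(r:ℝ)) ≤ ∏ i : Fin r, N ^ (1/(r:ℝ)) := by
      refine Finset.prod_le_prod (fun i _ => by positivity) (fun i _ => ?_)
      exact Real.rpow_le_rpow (hposR i).le (hle i) (by positivity)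
    have step3 : ∏ i : Fin r, N ^ (1/(r:ℝ)) = N := by
      rw [Finset.prod_const, Finset.card_univ, Fintype.card_fin,
        ← Real.rpow_natCast (N ^ (1/(r:ℝ))) r, ← Real.rpow_mul (by positivity)]
      rw [one_div, inv_mul_cancel₀ (ne_of_gt hrpos), Real.rpow_one]
    have step4 : N * ∏ i, (n i : ℝ) ≤ ∏ i, ((n i : ℝ)) ^ (s i) := by
      rw [← Finset.mul_prod_erase univ (fun i => ((n i : ℝ)) ^ (s i)) (mem_univ i0),
        ← Finset.mul_prod_erase univ (fun i => ((n i : ℝ))) (mem_univ i0), ← mul_assoc]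
      refine mul_le_mul ?_ ?_ ?_ ?_
      · calc N * (n i0 : ℝ) = (n i0 : ℝ) ^ 2 := by rw [hN]; ring
          _ ≤ (n i0 : ℝ) ^ (s i0) := pow_le_pow_right₀ (hone i0) h2
      · exact Finset.prod_le_prod (fun i _ => (hposR i).le)
          (fun i _ => le_self_pow₀ (hone i) (by have := h1 i; omega))
      · exact Finset.prod_nonneg (fun i _ => (hposR i).le)
      · positivity
    calc ∏ i, ((n i : ℝ)) ^ p = (∏ i, (n i : ℝ)) * ∏ i, ((n i : ℝ)) ^ (1/(r:ℝ)) := step1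
      _ ≤ (∏ i, (n i : ℝ)) * ∏ i : Fin r, N ^ (1/(r:ℝ)) := by
          refine mul_le_mul_of_nonneg_left step2 (Finset.prod_nonneg fun i _ => (hposR i).le)
      _ = N * ∏ i, (n i : ℝ) := by rw [step3]; ring
      _ ≤ ∏ i, ((n i : ℝ)) ^ (s i) := step4
  calc ∏ i, (((n i : ℝ)) ^ (s i))⁻¹ = (∏ i, ((n i : ℝ)) ^ (s i))⁻¹ := by
        rw [Finset.prod_inv_distrib]
    _ ≤ (∏ i, ((n i : ℝ)) ^ p)⁻¹ := by
        apply inv_anti₀ (Finset.prod_pos fun i _ => Real.rpow_pos_of_pos (hposR i) p) key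
    _ = ∏ i, g (n i) := by rw [← Finset.prod_inv_distrib]

/-- Power series expansion of Hurwitz multizeta functions near 0, valid for `|z| < 1/2`. -/
theorem hurwitz_mzv_taylor (r : ℕ) (hr : 0 < r) (s : Fin r → ℕ)
    (h1 : ∀ i, 1 ≤ s i) (h2 : 2 ≤ s ⟨0, hr⟩) (z : ℂ) (hz : ‖z‖ < 1 / 2) :
    Summable (fun n : {f : Fin r → ℕ // StrictAnti f ∧ ∀ i, 0 < f i} =>
        ∏ i, (((n.1 i : ℂ) + z) ^ s i)⁻¹) ∧
    ∑' n : {f : Fin r → ℕ // StrictAnti f ∧ ∀ i, 0 < f i},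
        ∏ i, (((n.1 i : ℂ) + z) ^ s i)⁻¹
      = ∑' k : Fin r → ℕ,
          (∏ i, (Nat.choose (s i + k i - 1) (k i) : ℂ)) *
            (∑' n : {f : Fin r → ℕ // StrictAnti f ∧ ∀ i, 0 < f i},
                ∏ i, ((n.1 i : ℂ) ^ (s i + k i))⁻¹) *
            (-z) ^ (∑ i, k i) := by
  set S := {f : Fin r → ℕ // StrictAnti f ∧ ∀ i, 0 < f i} with hS
  set T : Fin r → ℕ → ℕ → ℂ :=
    fun i m k => ((s i + k - 1).choose k : ℂ) * (-z)^k * ((m:ℂ)^(s i + k))⁻¹ with hT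
  have hn1 : ∀ (n : S) (i : Fin r), 1 ≤ n.1 i := fun n i => n.2.2 i
  -- per-n complex HasSum over k of the product family
  have hA : ∀ n : S, HasSum (fun k : Fin r → ℕ => ∏ i, T i (n.1 i) (k i))
      (∏ i, (((n.1 i : ℂ) + z) ^ s i)⁻¹) ∧
      Summable (fun k : Fin r → ℕ => ‖∏ i, T i (n.1 i) (k i)‖) := by
    intro n
    exact pi_hasSum_prod r (fun i k => T i (n.1 i) k)
      (fun i => (((n.1 i : ℂ) + z) ^ s i)⁻¹)
      (fun i => (binom_norm_hasSum (s i) (h1 i) (n.1 i) (hn1 n i) z hz).summable)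
      (fun i => binom_hasSum (s i) (h1 i) (n.1 i) (hn1 n i) z hz)
  -- per-n real HasSum of the norms
  have hB : ∀ n : S, HasSum (fun k : Fin r → ℕ => ∏ i, ‖T i (n.1 i) (k i)‖)
      (∏ i, (((n.1 i : ℝ) - ‖z‖) ^ s i)⁻¹) := by
    intro n
    refine (pi_hasSum_prod (𝕜 := ℝ) r (fun i k => ‖T i (n.1 i) k‖)
      (fun i => (((n.1 i : ℝ) - ‖z‖) ^ s i)⁻¹) (fun i => ?_)
      (fun i => binom_norm_hasSum (s i) (h1 i) (n.1 i) (hn1 n i) z hz)).1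
    exact (binom_norm_hasSum (s i) (h1 i) (n.1 i) (hn1 n i) z hz).summable.congr
      (fun k => (norm_norm _).symm)
  -- dominating bound
  have hbound : ∀ n : S, ∏ i, (((n.1 i : ℝ) - ‖z‖) ^ s i)⁻¹
      ≤ ∏ i, (2:ℝ)^(s i) * (((n.1 i : ℝ)) ^ s i)⁻¹ := by
    intro n
    have hm1 : ∀ i, (1:ℝ) ≤ (n.1 i : ℝ) := fun i => by exact_mod_cast hn1 n i
    refine Finset.prod_le_prod (fun i _ => inv_nonneg.mpr (pow_nonneg (by
      have := hm1 i; linarith) _)) (fun i _ => ?_)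
    have hm1' := hm1 i
    have hhalf : (n.1 i : ℝ)/2 ≤ (n.1 i : ℝ) - ‖z‖ := by
      linarith
    have hpowle : ((n.1 i : ℝ)/2) ^ s i ≤ ((n.1 i : ℝ) - ‖z‖) ^ s i :=
      pow_le_pow_left₀ (by linarith) hhalf _
    have h2pos : (0:ℝ) < ((n.1 i : ℝ)/2) ^ s i := by positivity
    calc (((n.1 i : ℝ) - ‖z‖) ^ s i)⁻¹ ≤ (((n.1 i : ℝ)/2) ^ s i)⁻¹ := by
          apply inv_anti₀ h2pos hpowle
      _ = (2:ℝ)^(s i) * (((n.1 i : ℝ)) ^ s i)⁻¹ := by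
          rw [div_pow, div_eq_mul_inv, mul_inv, inv_inv]
          ring
  have hdom : Summable (fun n : S => ∏ i, (2:ℝ)^(s i) * (((n.1 i : ℝ)) ^ s i)⁻¹) := by
    have := (mzv_aux_summable r hr s h1 h2).mul_left (∏ i, (2:ℝ)^(s i))
    apply this.congr
    intro n
    rw [← Finset.prod_mul_distrib]
  -- summability of the double family
  have hF : Summable (Function.uncurry (fun (n : S) (k : Fin r → ℕ) =>
      ∏ i, T i (n.1 i) (k i))) := by
    apply Summable.of_norm
    have hnorm : ∀ p : S × (Fin r → ℕ),
        ‖∏ i, T i (p.1.1 i) (p.2 i)‖ = ∏ i, ‖T i (p.1.1 i) (p.2 i)‖ := fun p => norm_prod _ _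
    refine Summable.congr ?_ (fun p => (hnorm p).symm)
    refine (summable_prod_of_nonneg (fun p => Finset.prod_nonneg fun i _ => norm_nonneg _)).2
      ⟨fun n => (hB n).summable, ?_⟩
    refine Summable.of_nonneg_of_le (fun n => tsum_nonneg fun k =>
      Finset.prod_nonneg fun i _ => norm_nonneg _) (fun n => ?_) hdom
    rw [(hB n).tsum_eq]
    exact hbound n
  -- summability of the norms of partial sums, giving conclusion 1
  have hsummable : Summable (fun n : S => ∏ i, (((n.1 i : ℂ) + z) ^ s i)⁻¹) := by
    have hg' : Summable (fun n : S => ∏ i, (((n.1 i : ℝ) - ‖z‖) ^ s i)⁻¹) :=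
      Summable.of_nonneg_of_le (fun n => Finset.prod_nonneg fun i _ => inv_nonneg.mpr
        (pow_nonneg (by
          have h' : (1:ℝ) ≤ (n.1 i : ℝ) := by exact_mod_cast hn1 n i
          linarith) _))
        hbound hdom
    refine Summable.of_norm_bounded hg' (fun n => ?_)
    rw [← (hA n).1.tsum_eq, ← (hB n).tsum_eq]
    refine le_trans (norm_tsum_le_tsum_norm (hA n).2) ?_
    refine le_of_eq (tsum_congr fun k => ?_)
    exact norm_prod _ _
  refine ⟨hsummable, ?_⟩
  -- Fubini
  calc ∑' n : S, ∏ i, (((n.1 i : ℂ) + z) ^ s i)⁻¹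
      = ∑' (n : S) (k : Fin r → ℕ), ∏ i, T i (n.1 i) (k i) :=
        tsum_congr fun n => ((hA n).1.tsum_eq).symm
    _ = ∑' (k : Fin r → ℕ) (n : S), ∏ i, T i (n.1 i) (k i) := (Summable.tsum_comm' hF (fun n => (hA n).1.summable) (fun k => hF.prod_symm.prod_factor k)).symm
    _ = ∑' k : Fin r → ℕ,
          (∏ i, (Nat.choose (s i + k i - 1) (k i) : ℂ)) *
            (∑' n : S, ∏ i, ((n.1 i : ℂ) ^ (s i + k i))⁻¹) * (-z) ^ (∑ i, k i) := by
        refine tsum_congr fun k => ?_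
        have hfk : ∀ n : S, ∏ i, T i (n.1 i) (k i)
            = ((∏ i, (Nat.choose (s i + k i - 1) (k i) : ℂ)) * (-z) ^ (∑ i, k i)) *
              ∏ i, ((n.1 i : ℂ) ^ (s i + k i))⁻¹ := by
          intro n
          rw [← Finset.prod_pow_eq_pow_sum, mul_assoc, ← Finset.prod_mul_distrib,
            ← Finset.prod_mul_distrib]
          exact Finset.prod_congr rfl fun i _ => by simp only [hT]; ring
        rw [tsum_congr hfk, tsum_mul_left]
        ring
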